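/- Let φ be a nontrivial exponential map on an integral domain A over a field k, and let x ∈ A be an element of minimal positive φ-degree n (i.e., deg_φ(x) = n > 0 and every element of A with positive φ-degree has φ-degree at least n). Then for every nonzero a ∈ A, n divides deg_φ(a). -/
import Mathlib


open Polynomial

/-- An exponential map on a `k`-algebra `A`: a `k`-algebra homomorphism `φ : A → A[U]`
such that evaluating at `U = 0` is the identity and `φ_S φ_U = φ_{S+U}`. -/
def IsExpMap {k A : Type*} [CommSemiring k] [CommSemiring A] [Algebra k A]
    (φ : A →ₐ[k] A[X]) : Prop :=
  (∀ a : A, (φ a).eval 0 = a) ∧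
  (∀ a : A,
    eval₂ ((mapRingHom (C : A →+* A[X])).comp (φ : A →+* A[X])) (C X) (φ a)
      = eval₂ ((C : A[X] →+* A[X][X]).comp (C : A →+* A[X])) (X + C X) (φ a))

/-- The ring of `φ`-invariants `A^φ = {a : A | φ a = a}`. -/
noncomputable def expInv {k A : Type*} [CommSemiring k] [CommSemiring A] [Algebra k A]
    (φ : A →ₐ[k] A[X]) : Subalgebra k A :=
  AlgHom.equalizer φ (IsScalarTower.toAlgHom k A A[X])

/-- The AK invariant: the intersection of the rings of invariants of all exponential maps. -/
noncomputable def AK (k A : Type*) [CommSemiring k] [CommSemiring A] [Algebra k A] : Subalgebra k A :=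
  ⨅ φ ∈ {ψ : A →ₐ[k] A[X] | IsExpMap ψ}, expInv φ


private lemma lucasL {p : ℕ} (hp : p.Prime) :
    ∀ (e s t : ℕ), p ^ e ∣ s → t < p ^ e → Nat.choose (s + t) t ≡ 1 [MOD p] := by
  haveI : Fact p.Prime := ⟨hp⟩
  intro e
  induction e with
  | zero =>
    intro s t _ ht
    have : t = 0 := by simpa using ht
    subst this
    simp [Nat.ModEq.refl]
  | succ e IH =>
    intro s t hs ht
    obtain ⟨u, rfl⟩ := hs
    have hp0 : 0 < p := hp.pos
    have h1 : (p ^ (e+1) * u + t) % p = t % p := by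
      have he : p ^ (e+1) * u = p * (p ^ e * u) := by ring
      rw [he, Nat.mul_add_mod]
    have h2 : (p ^ (e+1) * u + t) / p = p ^ e * u + t / p := by
      rw [pow_succ, mul_comm (p^e) p, mul_assoc, Nat.mul_add_div hp0]
    have h3 : t / p < p ^ e := by
      rw [Nat.div_lt_iff_lt_mul hp0, ← pow_succ]
      exact ht
    calc Nat.choose (p ^ (e+1) * u + t) t
        ≡ Nat.choose ((p ^ (e+1) * u + t) % p) (t % p) *
          Nat.choose ((p ^ (e+1) * u + t) / p) (t / p) [MOD p] :=
          Choose.choose_modEq_choose_mod_mul_choose_div_nat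
      _ = Nat.choose (p ^ e * u + t / p) (t / p) := by
          rw [h1, h2, Nat.choose_self, one_mul]
      _ ≡ 1 [MOD p] := IH _ _ ⟨u, rfl⟩ h3

private lemma lucasM {p : ℕ} (hp : p.Prime) (c : ℕ) :
    ∀ e : ℕ, Nat.choose (c * p ^ e) (p ^ e) ≡ c [MOD p] := by
  haveI : Fact p.Prime := ⟨hp⟩
  intro e
  induction e with
  | zero => simp [Nat.choose_one_right, Nat.ModEq.refl]
  | succ e IH =>
    have hp0 : 0 < p := hp.pos
    have hd1 : (c * p ^ (e+1)) / p = c * p ^ e := by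
      rw [pow_succ, ← mul_assoc, Nat.mul_div_cancel _ hp0]
    have hd2 : (p ^ (e+1)) / p = p ^ e := by
      rw [pow_succ, Nat.mul_div_cancel _ hp0]
    have hm1 : (c * p ^ (e+1)) % p = 0 := by
      have : p ∣ c * p ^ (e+1) := Dvd.dvd.mul_left (dvd_pow_self p (Nat.succ_ne_zero e)) c
      omega
    have hm2 : (p ^ (e+1)) % p = 0 := by
      have : p ∣ p ^ (e+1) := dvd_pow_self p (Nat.succ_ne_zero e)
      omega
    calc Nat.choose (c * p ^ (e+1)) (p ^ (e+1))
        ≡ Nat.choose ((c * p ^ (e+1)) % p) ((p ^ (e+1)) % p) *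
          Nat.choose ((c * p ^ (e+1)) / p) ((p ^ (e+1)) / p) [MOD p] :=
          Choose.choose_modEq_choose_mod_mul_choose_div_nat
      _ = Nat.choose (c * p ^ e) (p ^ e) := by
          rw [hm1, hm2, hd1, hd2, Nat.choose_self, one_mul]
      _ ≡ c [MOD p] := IH

private lemma key {k A : Type*} [CommSemiring k] [CommSemiring A] [Algebra k A]
    (φ : A →ₐ[k] A[X]) (hφ : IsExpMap φ) (a : A) (i j : ℕ) :
    (φ ((φ a).coeff i)).coeff j = (((i + j).choose j : ℕ) : A) * (φ a).coeff (i + j) := by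
  have hL : ∀ p : A[X],
      ((eval₂ ((mapRingHom (C : A →+* A[X])).comp (φ : A →+* A[X])) (C X) p).coeff j).coeff i
        = (φ (p.coeff i)).coeff j := by
    intro p
    induction p using Polynomial.induction_on' with
    | add p q hp hq => simp only [eval₂_add, coeff_add, map_add, hp, hq]
    | monomial e c =>
      rw [eval₂_monomial]
      simp only [RingHom.coe_comp, Function.comp_apply, coe_mapRingHom]
      rw [← map_pow (C : A[X] →+* A[X][X]), coeff_mul_C, coeff_map, coeff_C_mul,
        coeff_X_pow, coeff_monomial]
      rcases eq_or_ne e i with rfl | hei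
      · simp
      · simp [hei, Ne.symm hei]
  have hR : ∀ p : A[X],
      ((eval₂ ((C : A[X] →+* A[X][X]).comp (C : A →+* A[X])) (X + C X) p).coeff j).coeff i
        = (((i + j).choose j : ℕ) : A) * p.coeff (i + j) := by
    intro p
    induction p using Polynomial.induction_on' with
    | add p q hp hq => simp only [eval₂_add, coeff_add, hp, hq, mul_add]
    | monomial e c =>
      rw [eval₂_monomial]
      simp only [RingHom.coe_comp, Function.comp_apply]
      rw [coeff_C_mul, coeff_X_add_C_pow, ← Polynomial.C_eq_natCast, coeff_C_mul,
        coeff_mul_C, coeff_X_pow, coeff_monomial]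
      rcases eq_or_ne e (i + j) with rfl | hne
      · have h1 : i + j - j = i := by omega
        simp [h1, mul_comm]
      · rw [if_neg hne, mul_zero]
        by_cases hj : j ≤ e
        · have h2 : ¬ (i = e - j) := by omega
          simp [h2]
        · rw [Nat.choose_eq_zero_of_lt (by omega), Nat.cast_zero, mul_zero, mul_zero]
  have H := congrArg (fun q : A[X][X] => (q.coeff j).coeff i) (hφ.2 a)
  simpa only [hL, hR] using H

private lemma extract {k A : Type*} [CommSemiring k] [CommRing A] [IsDomain A] [Algebra k A]
    (φ : A →ₐ[k] A[X]) (hφ : IsExpMap φ) {a : A} (ha : a ≠ 0) {i : ℕ}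
    (hi : i ≤ (φ a).natDegree) (hc : (((φ a).natDegree.choose i : ℕ) : A) ≠ 0) :
    ∃ b : A, b ≠ 0 ∧ (φ b).natDegree = (φ a).natDegree - i := by
  have hφa : φ a ≠ 0 := fun h => ha (by rw [← hφ.1 a, h, eval_zero])
  set d := (φ a).natDegree with hd
  set b := (φ a).coeff i with hb
  have hlc : (φ a).coeff d ≠ 0 := by
    rw [hd, coeff_natDegree]
    exact leadingCoeff_ne_zero.mpr hφa
  have h1 : (φ b).coeff (d - i) ≠ 0 := by
    rw [hb, key φ hφ a i (d - i), Nat.add_sub_cancel' hi, Nat.choose_symm hi]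
    exact mul_ne_zero hc hlc
  have h2 : ∀ N, d - i < N → (φ b).coeff N = 0 := by
    intro N hN
    rw [hb, key φ hφ a i N, coeff_eq_zero_of_natDegree_lt (by omega), mul_zero]
  refine ⟨b, fun h0 => h1 (by rw [h0, map_zero, coeff_zero]), ?_⟩
  exact le_antisymm (natDegree_le_iff_coeff_eq_zero.mpr h2) (le_natDegree_of_ne_zero h1)

/-- Let `φ` be a nontrivial exponential map on a domain `A` over `k`, and let
`x` have minimal positive `φ`-degree `n`. Then `n` divides `deg_φ(a)` for every nonzero
`a : A`. -/
theorem statement7 {k A : Type*} [Field k] [CommRing A] [IsDomain A] [Algebra k A]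
    (φ : A →ₐ[k] A[X]) (hφ : IsExpMap φ)
    (hnt : φ ≠ IsScalarTower.toAlgHom k A A[X])
    (x : A) (n : ℕ) (hn : 0 < n) (hxn : (φ x).natDegree = n)
    (hmin : ∀ a : A, 0 < (φ a).natDegree → n ≤ (φ a).natDegree) :
    ∀ a : A, a ≠ 0 → n ∣ (φ a).natDegree := by
  intro a ha
  suffices Hmain : ∀ d : ℕ, (∃ b : A, b ≠ 0 ∧ (φ b).natDegree = d) → n ∣ d from
    Hmain _ ⟨a, ha, rfl⟩
  have hx0 : x ≠ 0 := by
    intro h; rw [h, map_zero, natDegree_zero] at hxn; omega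
  have hPmul : ∀ m : ℕ, 0 < m → ∃ b : A, b ≠ 0 ∧ (φ b).natDegree = m * n := by
    intro m hm
    exact ⟨x ^ m, pow_ne_zero _ hx0, by rw [map_pow, natDegree_pow, hxn]⟩
  have hminP : ∀ d : ℕ, (∃ b : A, b ≠ 0 ∧ (φ b).natDegree = d) → 0 < d → n ≤ d := by
    rintro d ⟨b, hb, rfl⟩ hd
    exact hmin b hd
  have hext : ∀ d : ℕ, (∃ b : A, b ≠ 0 ∧ (φ b).natDegree = d) →
      ∀ i ≤ d, ((d.choose i : ℕ) : A) ≠ 0 → ∃ b : A, b ≠ 0 ∧ (φ b).natDegree = d - i := by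
    rintro d ⟨b, hb, rfl⟩ i hi hc
    exact extract φ hφ hb hi hc
  haveI := ringChar.charP A
  rcases CharP.char_is_prime_or_zero A (ringChar A) with hq | hq
  · -- positive characteristic p
    set p := ringChar A with hpdef
    have hcast : ∀ m : ℕ, ¬ p ∣ m → ((m : ℕ) : A) ≠ 0 := fun m hm h0 =>
      hm ((CharP.cast_eq_zero_iff A p m).mp h0)
    have hmod : ∀ m c : ℕ, m ≡ c [MOD p] → ¬ p ∣ c → ¬ p ∣ m := by
      intro m c hmc hcnd hdvd
      exact hcnd (Nat.modEq_zero_iff_dvd.mp (hmc.symm.trans (Nat.modEq_zero_iff_dvd.mpr hdvd)))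
    have hnd1 : ¬ p ∣ 1 := fun h => by have := Nat.le_of_dvd one_pos h; have := hq.one_lt; omega
    intro d
    induction d using Nat.strong_induction_on with
    | _ d IH =>
      intro hPd
      rcases Nat.eq_zero_or_pos d with rfl | hd0
      · exact dvd_zero n
      have hnle : n ≤ d := hminP d hPd hd0
      set e := Nat.log p d with he
      have hp1 : 1 < p := hq.one_lt
      have hpe_le : p ^ e ≤ d := Nat.pow_log_le_self p (by omega)
      have hlt : d < p ^ (e+1) := Nat.lt_pow_succ_log_self hp1 d
      set t := d % p ^ e with ht
      set c := d / p ^ e with hc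
      have hpe0 : 0 < p ^ e := pow_pos (by omega) e
      have hdc : p ^ e * c + t = d := Nat.div_add_mod d (p ^ e)
      have hc1 : 1 ≤ c := (Nat.le_div_iff_mul_le hpe0).mpr (by omega)
      have hcp : c < p := by
        rw [hc, Nat.div_lt_iff_lt_mul hpe0]
        have hps : p ^ (e+1) = p * p ^ e := by rw [pow_succ, mul_comm]
        omega
      have httle : t < p ^ e := Nat.mod_lt _ hpe0
      have hpec0 : 0 < p ^ e * c := Nat.mul_pos hpe0 (by omega)
      rcases Nat.eq_zero_or_pos t with ht0 | ht0
      · -- t = 0 : d = p^e * c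
        have hdeq : d = p ^ e * c := by omega
        rcases eq_or_lt_of_le hc1 with hc1' | hc2
        · -- c = 1 : d = p^e
          have hdpe : d = p ^ e := by rw [hdeq, ← hc1', mul_one]
          rcases Nat.eq_zero_or_pos (d % n) with hr0 | hr0
          · exact Nat.dvd_of_mod_eq_zero hr0
          exfalso
          have hmul : (d / n + 1) * n = n * (d / n) + n := by ring
          have hmn : n * (d / n) + d % n = d := Nat.div_add_mod d n
          have hrlt : d % n < n := Nat.mod_lt _ hn
          have hdm1 : d < (d / n + 1) * n := by omega
          have hdm2 : (d / n + 1) * n < d + n := by omega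
          have hPmn := hPmul (d / n + 1) (Nat.succ_pos _)
          set r := (d / n + 1) * n - d with hr
          have h7 : (d / n + 1) * n = d + r := by omega
          have h8 : Nat.choose (d + r) d = Nat.choose (d + r) r := by
            have h8' := Nat.choose_symm (n := d + r) (k := r) (by omega)
            rwa [Nat.add_sub_cancel] at h8'
          have hchoose : ¬ p ∣ Nat.choose ((d / n + 1) * n) d := by
            rw [h7, h8]
            exact hmod _ 1 (lucasL hq e d r (by simp [hdpe]) (by omega)) hnd1
          have hPr := hext ((d / n + 1) * n) hPmn d (by omega) (hcast _ hchoose)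
          have := hminP r hPr (by omega)
          omega
        · -- c ≥ 2
          have h9 : ¬ p ∣ Nat.choose d (p ^ e) := by
            rw [hdeq, mul_comm]
            exact hmod _ c (lucasM hq c e)
              (fun hdvd => by have := Nat.le_of_dvd (by omega) hdvd; omega)
          have h10 : Nat.choose d (d - p ^ e) = Nat.choose d (p ^ e) := Nat.choose_symm hpe_le
          have hP1 := hext d hPd (p ^ e) hpe_le (hcast _ h9)
          have hP2' := hext d hPd (d - p ^ e) (by omega) (hcast _ (h10 ▸ h9))
          rw [show d - (d - p ^ e) = p ^ e from by omega] at hP2'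
          have hpelt : p ^ e * 2 ≤ d := by
            rw [hdeq]; exact Nat.mul_le_mul_left _ (by omega)
          have hd1 : n ∣ d - p ^ e := IH _ (by omega) hP1
          have hd2 : n ∣ p ^ e := IH _ (by omega) hP2'
          have hsum : d = (d - p ^ e) + p ^ e := by omega
          rw [hsum]; exact Nat.dvd_add hd1 hd2
      · -- t > 0
        have hch1 : ¬ p ∣ Nat.choose d t := by
          have hl := lucasL hq e (p ^ e * c) t (Dvd.intro c rfl) httle
          rw [hdc] at hl
          exact hmod _ 1 hl hnd1
        have hch2 : ¬ p ∣ Nat.choose d (d - t) := by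
          rw [Nat.choose_symm (by omega : t ≤ d)]; exact hch1
        have hPs := hext d hPd t (by omega) (hcast _ hch1)
        have hPt := hext d hPd (d - t) (by omega) (hcast _ hch2)
        rw [show d - (d - t) = t from by omega] at hPt
        have h11 : n ∣ d - t := IH _ (by omega) hPs
        have h12 : n ∣ t := IH _ (by omega) hPt
        have hsum : d = (d - t) + t := by omega
        rw [hsum]; exact Nat.dvd_add h11 h12
  · -- characteristic zero
    haveI : CharP A 0 := hq ▸ ringChar.charP A
    haveI : CharZero A := CharP.charP_to_charZero A
    have hP1 := hext n ⟨x, hx0, hxn⟩ (n - 1) (by omega)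
      (Nat.cast_ne_zero.mpr (Nat.choose_pos (by omega)).ne')
    rw [show n - (n - 1) = 1 from by omega] at hP1
    have hn1 : n = 1 := by
      have := hminP 1 hP1 one_pos
      omega
    intro d _
    rw [hn1]
    exact one_dvd d
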